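/- Let (X⁺, T) be a transitive locally compact one-sided countable Markov shift and φ a λ-transient potential with summable variations. Fix an origin state o ∈ S and define the Martin kernel K(f, x | λ) = G(f, x | λ) / G(1_{[o]}, x | λ). Then for every non-zero f ∈ C_c⁺(X⁺) there exist constants 0 < c_f ≤ C_f such that c_f ≤ K(f, x | λ) ≤ C_f for all x ∈ X⁺. -/

import Mathlib

open MeasureTheory ENNReal Filter Topology

variable {S : Type*}

/-- The one-sided topological Markov shift over alphabet `S` with transition relation `Adj`. -/
abbrev MShift (Adj : S → S → Prop) : Type _ :=
  {x : ℕ → S // ∀ i, Adj (x i) (x (i + 1))}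

/-- The left shift map. -/
def shiftMap (Adj : S → S → Prop) (x : MShift Adj) : MShift Adj :=
  ⟨fun i => x.1 (i + 1), fun i => x.2 (i + 1)⟩

/-- The Ruelle (transfer) operator on non-negative functions. -/
noncomputable def Ruelle (Adj : S → S → Prop) (φ : MShift Adj → ℝ)
    (f : MShift Adj → ℝ≥0∞) (x : MShift Adj) : ℝ≥0∞ :=
  ∑' y : {y : MShift Adj // shiftMap Adj y = x}, ENNReal.ofReal (Real.exp (φ y.1)) * f y.1

/-- The Green's function `G(f, x | λ) = Σ_n λ⁻ⁿ (L_φⁿ f)(x)`. -/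
noncomputable def Green (Adj : S → S → Prop) (φ : MShift Adj → ℝ) (lam : ℝ)
    (f : MShift Adj → ℝ≥0∞) (x : MShift Adj) : ℝ≥0∞ :=
  ∑' n : ℕ, ENNReal.ofReal ((lam ^ n)⁻¹) * ((Ruelle Adj φ)^[n] f) x

/-- The cylinder set `[a] = {x : x₀ = a}`. -/
def cylA (Adj : S → S → Prop) (a : S) : Set (MShift Adj) := {x | x.1 0 = a}

/-- Indicator function of the cylinder `[a]`. -/
noncomputable def cylInd (Adj : S → S → Prop) (a : S) : MShift Adj → ℝ≥0∞ :=
  (cylA Adj a).indicator 1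

/-- Topological transitivity: every state can be reached from every state. -/
def TransitiveShift (Adj : S → S → Prop) : Prop :=
  ∀ a b : S, ∃ (n : ℕ) (x : MShift Adj), x.1 0 = a ∧ ((shiftMap Adj)^[n] x).1 0 = b

/-- Local compactness: each state has finitely many followers. -/
def LocFin (Adj : S → S → Prop) : Prop := ∀ a : S, {b : S | Adj a b}.Finite

/-- Set of values `|φ(x) − φ(y)|` over pairs agreeing in their first `m` coordinates. -/
def varSet (Adj : S → S → Prop) (φ : MShift Adj → ℝ) (m : ℕ) : Set ℝ :=
  {r | ∃ x y : MShift Adj, (∀ i < m, x.1 i = y.1 i) ∧ r = |φ x - φ y|}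

/-- The `m`-th variation of `φ`. -/
noncomputable def Var (Adj : S → S → Prop) (φ : MShift Adj → ℝ) (m : ℕ) : ℝ :=
  sSup (varSet Adj φ m)

/-- `φ` has summable variations. -/
def SummableVar (Adj : S → S → Prop) (φ : MShift Adj → ℝ) : Prop :=
  (∀ m, BddAbove (varSet Adj φ m)) ∧ Summable (Var Adj φ)

/-- A non-negative real function viewed as `ℝ≥0∞`-valued. -/
noncomputable def ofR {Adj : S → S → Prop} (f : MShift Adj → ℝ) : MShift Adj → ℝ≥0∞ :=
  fun x => ENNReal.ofReal (f x)

/-- `λ`-transience: the Green's function of every cylinder is finite everywhere. -/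
def Transient (Adj : S → S → Prop) (φ : MShift Adj → ℝ) (lam : ℝ) : Prop :=
  ∀ (a : S) (x : MShift Adj), Green Adj φ lam (cylInd Adj a) x ≠ ⊤


/-! ### Auxiliary lemmas -/

section Aux

lemma shift_iter_coord (Adj : S → S → Prop) (x : MShift Adj) (k i : ℕ) :
    ((shiftMap Adj)^[k] x).1 i = x.1 (i + k) := by
  induction k generalizing x with
  | zero => rfl
  | succ k ih =>
    rw [Function.iterate_succ_apply, ih]
    rfl

def prepend (Adj : S → S → Prop) (x : MShift Adj) (n : ℕ) (y : MShift Adj)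
    (h : y.1 0 = x.1 n) : MShift Adj :=
  ⟨fun i => if i < n then x.1 i else y.1 (i - n), by
    intro i
    rcases lt_trichotomy (i + 1) n with h1 | h1 | h1
    · simp only [if_pos h1, if_pos (by omega : i < n)]
      exact x.2 i
    · simp only [if_pos (by omega : i < n), if_neg (by omega : ¬ i + 1 < n)]
      have : i + 1 - n = 0 := by omega
      rw [this, h, ← h1]
      exact x.2 i
    · simp only [if_neg (by omega : ¬ i < n), if_neg (by omega : ¬ i + 1 < n)]
      have : i + 1 - n = (i - n) + 1 := by omega
      rw [this]
      exact y.2 (i - n)⟩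

lemma prepend_coord (Adj : S → S → Prop) (x : MShift Adj) (n : ℕ) (y : MShift Adj)
    (h : y.1 0 = x.1 n) {i : ℕ} (hi : i ≤ n) :
    (prepend Adj x n y h).1 i = x.1 i := by
  rcases lt_or_eq_of_le hi with hi | hi
  · simp [prepend, if_pos hi]
  · subst hi
    simp [prepend, h]

lemma shift_prepend (Adj : S → S → Prop) (x : MShift Adj) (n : ℕ) (y : MShift Adj)
    (h : y.1 0 = x.1 n) :
    (shiftMap Adj)^[n] (prepend Adj x n y h) = y := by
  apply Subtype.ext
  funext i
  rw [shift_iter_coord]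
  simp [prepend, if_neg (by omega : ¬ i + n < n)]

noncomputable def birk (Adj : S → S → Prop) (φ : MShift Adj → ℝ) (n : ℕ) (x : MShift Adj) : ℝ :=
  ∑ i ∈ Finset.range n, φ ((shiftMap Adj)^[i] x)

lemma ruelle_le (Adj : S → S → Prop) (φ : MShift Adj → ℝ) (g : MShift Adj → ℝ≥0∞)
    (w : MShift Adj) :
    ENNReal.ofReal (Real.exp (φ w)) * g w ≤ Ruelle Adj φ g (shiftMap Adj w) :=
  ENNReal.le_tsum (⟨w, rfl⟩ : {y : MShift Adj // shiftMap Adj y = shiftMap Adj w})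

lemma ruelle_single (Adj : S → S → Prop) (φ : MShift Adj → ℝ) (g : MShift Adj → ℝ≥0∞)
    (n : ℕ) (z : MShift Adj) :
    ENNReal.ofReal (Real.exp (birk Adj φ n z)) * g z
      ≤ ((Ruelle Adj φ)^[n] g) ((shiftMap Adj)^[n] z) := by
  induction n with
  | zero => simp [birk]
  | succ n ih =>
    rw [Function.iterate_succ_apply' (Ruelle Adj φ), Function.iterate_succ_apply' (shiftMap Adj)]
    have h1 : birk Adj φ (n + 1) z = birk Adj φ n z + φ ((shiftMap Adj)^[n] z) := by
      simp [birk, Finset.sum_range_succ]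
    calc ENNReal.ofReal (Real.exp (birk Adj φ (n + 1) z)) * g z
        = ENNReal.ofReal (Real.exp (φ ((shiftMap Adj)^[n] z))) *
            (ENNReal.ofReal (Real.exp (birk Adj φ n z)) * g z) := by
          rw [h1, Real.exp_add, ENNReal.ofReal_mul (Real.exp_nonneg _)]
          ring
      _ ≤ ENNReal.ofReal (Real.exp (φ ((shiftMap Adj)^[n] z))) *
            ((Ruelle Adj φ)^[n] g) ((shiftMap Adj)^[n] z) := mul_le_mul_right ih _
      _ ≤ _ := ruelle_le Adj φ _ _

lemma ruelle_mono (Adj : S → S → Prop) (φ : MShift Adj → ℝ) {g h : MShift Adj → ℝ≥0∞}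
    (hle : ∀ y, g y ≤ h y) (x : MShift Adj) : Ruelle Adj φ g x ≤ Ruelle Adj φ h x :=
  ENNReal.tsum_le_tsum fun y => mul_le_mul_right (hle y.1) _

lemma ruelle_iter_mono (Adj : S → S → Prop) (φ : MShift Adj → ℝ) (n : ℕ) :
    ∀ {g h : MShift Adj → ℝ≥0∞}, (∀ y, g y ≤ h y) → ∀ x : MShift Adj,
    ((Ruelle Adj φ)^[n] g) x ≤ ((Ruelle Adj φ)^[n] h) x := by
  induction n with
  | zero => intro g h hle x; exact hle x
  | succ n ih =>
    intro g h hle x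
    rw [Function.iterate_succ_apply, Function.iterate_succ_apply]
    exact ih (fun y => ruelle_mono Adj φ hle y) x

lemma ruelle_smul (Adj : S → S → Prop) (φ : MShift Adj → ℝ) (c : ℝ≥0∞)
    (g : MShift Adj → ℝ≥0∞) (x : MShift Adj) :
    Ruelle Adj φ (fun y => c * g y) x = c * Ruelle Adj φ g x := by
  unfold Ruelle
  rw [← ENNReal.tsum_mul_left]
  congr 1
  funext y
  ring

lemma ruelle_iter_smul (Adj : S → S → Prop) (φ : MShift Adj → ℝ) (n : ℕ) (c : ℝ≥0∞)
    (g : MShift Adj → ℝ≥0∞) (x : MShift Adj) :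
    ((Ruelle Adj φ)^[n] (fun y => c * g y)) x = c * ((Ruelle Adj φ)^[n] g) x := by
  induction n generalizing g with
  | zero => rfl
  | succ n ih =>
    rw [Function.iterate_succ_apply, Function.iterate_succ_apply]
    have : Ruelle Adj φ (fun y => c * g y) = fun y => c * Ruelle Adj φ g y := by
      funext y; exact ruelle_smul Adj φ c g y
    rw [this]
    exact ih _

lemma ruelle_sum {α : Type*} (Adj : S → S → Prop) (φ : MShift Adj → ℝ) (F : Finset α)
    (g : α → MShift Adj → ℝ≥0∞) (x : MShift Adj) :
    Ruelle Adj φ (fun y => ∑ a ∈ F, g a y) x = ∑ a ∈ F, Ruelle Adj φ (g a) x := by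
  unfold Ruelle
  rw [← Summable.tsum_finsetSum (fun a _ => ENNReal.summable)]
  congr 1
  funext y
  rw [Finset.mul_sum]

lemma ruelle_iter_sum {α : Type*} (Adj : S → S → Prop) (φ : MShift Adj → ℝ) (n : ℕ)
    (F : Finset α) (g : α → MShift Adj → ℝ≥0∞) (x : MShift Adj) :
    ((Ruelle Adj φ)^[n] (fun y => ∑ a ∈ F, g a y)) x
      = ∑ a ∈ F, ((Ruelle Adj φ)^[n] (g a)) x := by
  induction n generalizing g with
  | zero => rfl
  | succ n ih =>
    rw [Function.iterate_succ_apply]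
    have : Ruelle Adj φ (fun y => ∑ a ∈ F, g a y) = fun y => ∑ a ∈ F, Ruelle Adj φ (g a) y := by
      funext y; exact ruelle_sum Adj φ F g y
    rw [this, ih]
    exact Finset.sum_congr rfl fun a _ => congrFun (Function.iterate_succ_apply _ _ _).symm x

lemma green_mono (Adj : S → S → Prop) (φ : MShift Adj → ℝ) (lam : ℝ)
    {g h : MShift Adj → ℝ≥0∞} (hle : ∀ y, g y ≤ h y) (x : MShift Adj) :
    Green Adj φ lam g x ≤ Green Adj φ lam h x :=
  ENNReal.tsum_le_tsum fun n => mul_le_mul_right (ruelle_iter_mono Adj φ n hle x) _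

lemma green_smul (Adj : S → S → Prop) (φ : MShift Adj → ℝ) (lam : ℝ) (c : ℝ≥0∞)
    (g : MShift Adj → ℝ≥0∞) (x : MShift Adj) :
    Green Adj φ lam (fun y => c * g y) x = c * Green Adj φ lam g x := by
  unfold Green
  rw [← ENNReal.tsum_mul_left]
  congr 1
  funext n
  rw [ruelle_iter_smul]
  ring

lemma green_sum {α : Type*} (Adj : S → S → Prop) (φ : MShift Adj → ℝ) (lam : ℝ)
    (F : Finset α) (g : α → MShift Adj → ℝ≥0∞) (x : MShift Adj) :
    Green Adj φ lam (fun y => ∑ a ∈ F, g a y) x = ∑ a ∈ F, Green Adj φ lam (g a) x := by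
  unfold Green
  rw [← Summable.tsum_finsetSum (fun a _ => ENNReal.summable)]
  congr 1
  funext n
  rw [ruelle_iter_sum, Finset.mul_sum]

lemma le_green (Adj : S → S → Prop) (φ : MShift Adj → ℝ) (lam : ℝ)
    (g : MShift Adj → ℝ≥0∞) (x : MShift Adj) : g x ≤ Green Adj φ lam g x := by
  have h0 : ENNReal.ofReal ((lam ^ 0)⁻¹) * ((Ruelle Adj φ)^[0] g) x = g x := by
    simp
  exact h0 ▸ ENNReal.le_tsum 0

lemma green_compare (Adj : S → S → Prop) (φ : MShift Adj → ℝ) {lam : ℝ} (hlam : 0 < lam)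
    (n : ℕ) (δ : ℝ≥0∞) (g h : MShift Adj → ℝ≥0∞)
    (hpt : ∀ y, δ * h y ≤ ((Ruelle Adj φ)^[n] g) y) (x : MShift Adj) :
    ENNReal.ofReal ((lam ^ n)⁻¹) * (δ * Green Adj φ lam h x) ≤ Green Adj φ lam g x := by
  have key : ∀ k : ℕ,
      ENNReal.ofReal ((lam ^ n)⁻¹) * (δ * (ENNReal.ofReal ((lam ^ k)⁻¹) * ((Ruelle Adj φ)^[k] h) x))
        ≤ ENNReal.ofReal ((lam ^ (k + n))⁻¹) * ((Ruelle Adj φ)^[k + n] g) x := by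
    intro k
    have h1 : ((Ruelle Adj φ)^[k + n] g) x = ((Ruelle Adj φ)^[k] ((Ruelle Adj φ)^[n] g)) x := by
      rw [Function.iterate_add_apply]
    have h2 : δ * ((Ruelle Adj φ)^[k] h) x ≤ ((Ruelle Adj φ)^[k] ((Ruelle Adj φ)^[n] g)) x := by
      rw [← ruelle_iter_smul]
      exact ruelle_iter_mono Adj φ k hpt x
    have h3 : ENNReal.ofReal ((lam ^ (k + n))⁻¹)
        = ENNReal.ofReal ((lam ^ n)⁻¹) * ENNReal.ofReal ((lam ^ k)⁻¹) := by
      rw [← ENNReal.ofReal_mul (by positivity), ← mul_inv, ← pow_add, add_comm]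
    rw [h1, h3]
    calc ENNReal.ofReal ((lam ^ n)⁻¹) * (δ * (ENNReal.ofReal ((lam ^ k)⁻¹) * ((Ruelle Adj φ)^[k] h) x))
        = ENNReal.ofReal ((lam ^ n)⁻¹) * ENNReal.ofReal ((lam ^ k)⁻¹)
            * (δ * ((Ruelle Adj φ)^[k] h) x) := by ring
      _ ≤ _ := mul_le_mul_right h2 _
  calc ENNReal.ofReal ((lam ^ n)⁻¹) * (δ * Green Adj φ lam h x)
      = ∑' k : ℕ, ENNReal.ofReal ((lam ^ n)⁻¹)
          * (δ * (ENNReal.ofReal ((lam ^ k)⁻¹) * ((Ruelle Adj φ)^[k] h) x)) := by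
        unfold Green
        rw [← ENNReal.tsum_mul_left, ← ENNReal.tsum_mul_left]
    _ ≤ ∑' k : ℕ, ENNReal.ofReal ((lam ^ (k + n))⁻¹) * ((Ruelle Adj φ)^[k + n] g) x :=
        ENNReal.tsum_le_tsum key
    _ ≤ Green Adj φ lam g x :=
        ENNReal.tsum_comp_le_tsum_of_injective (add_left_injective n) _

lemma abs_sub_le_var (Adj : S → S → Prop) (φ : MShift Adj → ℝ) (hvar : SummableVar Adj φ)
    (m : ℕ) {x y : MShift Adj} (h : ∀ i < m, x.1 i = y.1 i) :
    |φ x - φ y| ≤ Var Adj φ m :=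
  le_csSup (hvar.1 m) ⟨x, y, h, rfl⟩

lemma core_lemma (Adj : S → S → Prop) (φ : MShift Adj → ℝ) (hvar : SummableVar Adj φ)
    (X : MShift Adj) (n : ℕ) (g : MShift Adj → ℝ≥0∞) (ε : ℝ≥0∞)
    (hg : ∀ z : MShift Adj, (∀ i ≤ n, z.1 i = X.1 i) → ε ≤ g z) :
    ∃ δ : ℝ, 0 < δ ∧ ∀ y : MShift Adj, y.1 0 = X.1 n →
      ENNReal.ofReal δ * ε ≤ ((Ruelle Adj φ)^[n] g) y := by
  set V : ℝ := ∑ i ∈ Finset.range n, Var Adj φ (n - i + 1) with hV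
  refine ⟨Real.exp (birk Adj φ n X - V), Real.exp_pos _, ?_⟩
  intro y hy
  set z := prepend Adj X n y hy with hzdef
  have hz : ∀ i ≤ n, z.1 i = X.1 i := fun i hi => prepend_coord Adj X n y hy hi
  have hb : birk Adj φ n X - V ≤ birk Adj φ n z := by
    have hdiff : birk Adj φ n X - birk Adj φ n z
        = ∑ i ∈ Finset.range n, (φ ((shiftMap Adj)^[i] X) - φ ((shiftMap Adj)^[i] z)) := by
      unfold birk
      rw [Finset.sum_sub_distrib]
    have hle : birk Adj φ n X - birk Adj φ n z ≤ V := by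
      rw [hdiff, hV]
      refine Finset.sum_le_sum fun i hi => ?_
      refine (le_abs_self _).trans (abs_sub_le_var Adj φ hvar (n - i + 1) fun j hj => ?_)
      rw [shift_iter_coord, shift_iter_coord]
      exact (hz (j + i) (by simp only [Finset.mem_range] at hi; omega)).symm
    linarith
  have hstep : ENNReal.ofReal (Real.exp (birk Adj φ n X - V)) * ε
      ≤ ENNReal.ofReal (Real.exp (birk Adj φ n z)) * g z :=
    mul_le_mul' (ENNReal.ofReal_le_ofReal (Real.exp_le_exp.mpr hb)) (hg z hz)
  refine hstep.trans ?_
  have := ruelle_single Adj φ g n z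
  rwa [hzdef, shift_prepend Adj X n y hy] at this

end Aux


section Aux2

lemma cylInd_eq_one {Adj : S → S → Prop} {a : S} {z : MShift Adj} (h : z.1 0 = a) :
    cylInd Adj a z = 1 := by
  unfold cylInd
  rw [Set.indicator_of_mem (show z ∈ cylA Adj a from h)]
  rfl

lemma cylInd_eq_zero {Adj : S → S → Prop} {a : S} {z : MShift Adj} (h : ¬ z.1 0 = a) :
    cylInd Adj a z = 0 :=
  Set.indicator_of_notMem h 1

lemma ennreal_le_inv_mul {e X Y : ℝ≥0∞} (he0 : e ≠ 0) (het : e ≠ ∞) (h : e * X ≤ Y) :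
    X ≤ e⁻¹ * Y := by
  rw [← one_mul X, ← ENNReal.inv_mul_cancel he0 het, mul_assoc]
  exact mul_le_mul_right h _

lemma cyl_compare (Adj : S → S → Prop) (htrans : TransitiveShift Adj)
    (φ : MShift Adj → ℝ) (hvar : SummableVar Adj φ) {lam : ℝ} (hlam : 0 < lam) (o a : S) :
    ∃ e : ℝ≥0∞, e ≠ 0 ∧ e ≠ ∞ ∧
      ∀ x, e * Green Adj φ lam (cylInd Adj a) x ≤ Green Adj φ lam (cylInd Adj o) x := by
  obtain ⟨n, X, hX0, hXn⟩ := htrans o a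
  have hXn' : X.1 n = a := by
    rw [← hXn, shift_iter_coord, Nat.zero_add]
  have hg : ∀ z : MShift Adj, (∀ i ≤ n, z.1 i = X.1 i) → (1 : ℝ≥0∞) ≤ cylInd Adj o z := by
    intro z hz
    rw [cylInd_eq_one (by rw [hz 0 (Nat.zero_le n), hX0])]
  obtain ⟨δ, hδ, hkey⟩ := core_lemma Adj φ hvar X n (cylInd Adj o) 1 hg
  have hpt : ∀ y : MShift Adj,
      ENNReal.ofReal δ * cylInd Adj a y ≤ ((Ruelle Adj φ)^[n] (cylInd Adj o)) y := by
    intro y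
    by_cases hy : y.1 0 = a
    · rw [cylInd_eq_one hy]
      exact hkey y (by rw [hy, hXn'])
    · rw [cylInd_eq_zero hy, mul_zero]
      exact zero_le
  refine ⟨ENNReal.ofReal ((lam ^ n)⁻¹) * ENNReal.ofReal δ, ?_, ?_, fun x => ?_⟩
  · exact mul_ne_zero (ENNReal.ofReal_pos.mpr (by positivity)).ne'
      (ENNReal.ofReal_pos.mpr hδ).ne'
  · exact ENNReal.mul_ne_top ENNReal.ofReal_ne_top ENNReal.ofReal_ne_top
  · have := green_compare Adj φ hlam n (ENNReal.ofReal δ) (cylInd Adj o) (cylInd Adj a) hpt x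
    rwa [← mul_assoc] at this

end Aux2

/-- Uniform bounds for the Martin kernel `K(f, x|λ) = G(f, x|λ) / G(1_[o], x|λ)`:
for every non-zero `f ∈ C_c⁺(X⁺)` there are constants `0 < c_f ≤ C_f` with
`c_f ≤ K(f, x|λ) ≤ C_f` for all `x`. -/
theorem martin_kernel_bounds [Countable S] [TopologicalSpace S] [DiscreteTopology S]
    (Adj : S → S → Prop) (htrans : TransitiveShift Adj) (hloc : LocFin Adj)
    (φ : MShift Adj → ℝ) (hvar : SummableVar Adj φ) (lam : ℝ) (hlam : 0 < lam)
    (htransient : Transient Adj φ lam) (o : S) :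
    ∀ f : MShift Adj → ℝ, Continuous f → HasCompactSupport f → 0 ≤ f → f ≠ 0 →
      ∃ c C : ℝ, 0 < c ∧ c ≤ C ∧
        ∀ x : MShift Adj,
          ENNReal.ofReal c ≤ Green Adj φ lam (ofR f) x / Green Adj φ lam (cylInd Adj o) x ∧
          Green Adj φ lam (ofR f) x / Green Adj φ lam (cylInd Adj o) x ≤ ENNReal.ofReal C := by
  intro f hf hsupp hfpos hfne
  classical
  -- a point where f is positive
  obtain ⟨u, hu⟩ := Function.ne_iff.mp hfne
  have hu' : f u ≠ 0 := by simpa using hu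
  have hfu : 0 < f u := lt_of_le_of_ne (hfpos u) (Ne.symm hu')
  -- f is at least f u / 2 on a cylinder around u
  have hcont : ∃ m : ℕ, ∀ z : MShift Adj, (∀ i < m, z.1 i = u.1 i) → f u / 2 ≤ f z := by
    have hopen : IsOpen (f ⁻¹' Set.Ioi (f u / 2)) := isOpen_Ioi.preimage hf
    rw [isOpen_induced_iff] at hopen
    obtain ⟨W, hW, hWeq⟩ := hopen
    have huW : u.1 ∈ W := by
      have : u ∈ f ⁻¹' Set.Ioi (f u / 2) := by
        simp only [Set.mem_preimage, Set.mem_Ioi]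
        linarith
      rw [← hWeq] at this
      exact this
    obtain ⟨I, v, hv, hsub⟩ := isOpen_pi_iff.mp hW u.1 huW
    refine ⟨(I.sup id) + 1, fun z hz => ?_⟩
    have hzW : z.1 ∈ W := by
      apply hsub
      intro i hi
      have : z.1 i = u.1 i := hz i (by
        have := Finset.le_sup (f := id) hi
        simp only [id] at this
        omega)
      rw [this]
      exact (hv i hi).2
    have : z ∈ f ⁻¹' Set.Ioi (f u / 2) := by
      rw [← hWeq]
      exact hzW
    exact le_of_lt this
  obtain ⟨m, hm⟩ := hcont
  -- bound M for f on its support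
  have hu_mem : u ∈ tsupport f := subset_tsupport f (Function.mem_support.mpr hu')
  obtain ⟨xm, hxm_mem, hxm'⟩ := hsupp.exists_isMaxOn ⟨u, hu_mem⟩ hf.continuousOn
  rw [isMaxOn_iff] at hxm'
  have hxm : ∀ y ∈ tsupport f, f y ≤ f xm := hxm'
  set M := f xm with hMdef
  have hM : 0 < M := lt_of_lt_of_le hfu (hxm u hu_mem)
  -- finite set of initial states of the support
  have hcont0 : Continuous (fun x : MShift Adj => x.1 0) :=
    (continuous_apply 0).comp continuous_subtype_val
  have hFfin : ((fun x : MShift Adj => x.1 0) '' tsupport f).Finite :=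
    (hsupp.image hcont0).finite_of_discrete
  set F := hFfin.toFinset with hFdef
  -- pointwise bound of f by cylinders
  have hfle : ∀ z : MShift Adj,
      ofR f z ≤ ENNReal.ofReal M * ∑ a ∈ F, cylInd Adj a z := by
    intro z
    by_cases hz : f z = 0
    · simp [ofR, hz]
    · have hzs : z ∈ tsupport f := subset_tsupport f (Function.mem_support.mpr hz)
      have h1 : z.1 0 ∈ F := hFfin.mem_toFinset.mpr ⟨z, hzs, rfl⟩
      have h2 : (1 : ℝ≥0∞) ≤ ∑ a ∈ F, cylInd Adj a z := by
        calc (1 : ℝ≥0∞) = cylInd Adj (z.1 0) z := (cylInd_eq_one rfl).symm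
          _ ≤ ∑ a ∈ F, cylInd Adj a z :=
            Finset.single_le_sum (f := fun a => cylInd Adj a z) (fun a _ => zero_le) h1
      calc ofR f z ≤ ENNReal.ofReal M := ENNReal.ofReal_le_ofReal (hxm z hzs)
        _ = ENNReal.ofReal M * 1 := (mul_one _).symm
        _ ≤ _ := mul_le_mul_right h2 _
  -- comparison constants for each cylinder against [o]
  choose e he0 heT hee using fun a : S => cyl_compare Adj htrans φ hvar hlam o a
  -- upper bound constant
  set K₂ : ℝ≥0∞ := ENNReal.ofReal M * ∑ a ∈ F, (e a)⁻¹ with hK₂def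
  have hK₂T : K₂ ≠ ⊤ := by
    refine ENNReal.mul_ne_top ENNReal.ofReal_ne_top ?_
    exact (ENNReal.sum_lt_top.mpr fun a _ => (ENNReal.inv_ne_top.mpr (he0 a)).lt_top).ne
  have hupper : ∀ x : MShift Adj,
      Green Adj φ lam (ofR f) x ≤ K₂ * Green Adj φ lam (cylInd Adj o) x := by
    intro x
    calc Green Adj φ lam (ofR f) x
        ≤ Green Adj φ lam (fun z => ENNReal.ofReal M * ∑ a ∈ F, cylInd Adj a z) x :=
          green_mono Adj φ lam hfle x
      _ = ENNReal.ofReal M * ∑ a ∈ F, Green Adj φ lam (cylInd Adj a) x := by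
          rw [green_smul, green_sum]
      _ ≤ ENNReal.ofReal M * ∑ a ∈ F, (e a)⁻¹ * Green Adj φ lam (cylInd Adj o) x :=
          mul_le_mul_right (Finset.sum_le_sum fun a _ =>
            ennreal_le_inv_mul (he0 a) (heT a) (hee a x)) _
      _ = K₂ * Green Adj φ lam (cylInd Adj o) x := by
          rw [hK₂def, mul_assoc, Finset.sum_mul]
  -- lower bound: path from the cylinder of u to o
  obtain ⟨k, p, hp0, hpk⟩ := htrans (u.1 m) o
  have hp0' : p.1 0 = u.1 m := hp0
  set X : MShift Adj := prepend Adj u m p hp0' with hXdef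
  have hXi : ∀ i ≤ m, X.1 i = u.1 i := fun i hi => prepend_coord Adj u m p hp0' hi
  have hXn : X.1 (k + m) = o := by
    have h1 : ((shiftMap Adj)^[k + m] X).1 0 = X.1 (0 + (k + m)) := shift_iter_coord Adj X (k + m) 0
    rw [Nat.zero_add] at h1
    rw [← h1, Function.iterate_add_apply, shift_prepend, hpk]
  have hg : ∀ z : MShift Adj, (∀ i ≤ k + m, z.1 i = X.1 i) →
      ENNReal.ofReal (f u / 2) ≤ ofR f z := by
    intro z hz
    have : f u / 2 ≤ f z := hm z fun i hi => by
      rw [hz i (by omega), hXi i (by omega)]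
    exact ENNReal.ofReal_le_ofReal this
  obtain ⟨δ₁, hδ₁, hkey1⟩ := core_lemma Adj φ hvar X (k + m) (ofR f) (ENNReal.ofReal (f u / 2)) hg
  have hpt1 : ∀ y : MShift Adj,
      (ENNReal.ofReal δ₁ * ENNReal.ofReal (f u / 2)) * cylInd Adj o y
        ≤ ((Ruelle Adj φ)^[k + m] (ofR f)) y := by
    intro y
    by_cases hy : y.1 0 = o
    · rw [cylInd_eq_one hy, mul_one]
      exact hkey1 y (by rw [hy, hXn])
    · rw [cylInd_eq_zero hy, mul_zero]
      exact zero_le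
  set K₁ : ℝ≥0∞ := ENNReal.ofReal ((lam ^ (k + m))⁻¹)
      * (ENNReal.ofReal δ₁ * ENNReal.ofReal (f u / 2)) with hK₁def
  have hK₁0 : K₁ ≠ 0 := by
    refine mul_ne_zero (ENNReal.ofReal_pos.mpr (by positivity)).ne' ?_
    exact mul_ne_zero (ENNReal.ofReal_pos.mpr hδ₁).ne'
      (ENNReal.ofReal_pos.mpr (by linarith)).ne'
  have hK₁T : K₁ ≠ ⊤ :=
    ENNReal.mul_ne_top ENNReal.ofReal_ne_top
      (ENNReal.mul_ne_top ENNReal.ofReal_ne_top ENNReal.ofReal_ne_top)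
  have hlower : ∀ x : MShift Adj,
      K₁ * Green Adj φ lam (cylInd Adj o) x ≤ Green Adj φ lam (ofR f) x := by
    intro x
    have := green_compare Adj φ hlam (k + m) (ENNReal.ofReal δ₁ * ENNReal.ofReal (f u / 2))
      (ofR f) (cylInd Adj o) hpt1 x
    rwa [← mul_assoc, ← hK₁def] at this
  -- positivity and finiteness of the denominator
  have hpos : ∀ x : MShift Adj, Green Adj φ lam (cylInd Adj o) x ≠ 0 := by
    intro x
    have h1 : (1 : ℝ≥0∞) ≤ Green Adj φ lam (cylInd Adj (x.1 0)) x := by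
      have := le_green Adj φ lam (cylInd Adj (x.1 0)) x
      rwa [cylInd_eq_one rfl] at this
    have h2 := hee (x.1 0) x
    have h3 : (0 : ℝ≥0∞) < e (x.1 0) * Green Adj φ lam (cylInd Adj (x.1 0)) x :=
      ENNReal.mul_pos (he0 (x.1 0)) (by
        intro h0
        rw [h0] at h1
        simp at h1)
    exact (h3.trans_le h2).ne'
  -- final constants
  refine ⟨K₁.toReal, max K₁.toReal K₂.toReal, ENNReal.toReal_pos hK₁0 hK₁T, le_max_left _ _,
    fun x => ?_⟩
  have hB0 : Green Adj φ lam (cylInd Adj o) x ≠ 0 := hpos x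
  have hBT : Green Adj φ lam (cylInd Adj o) x ≠ ⊤ := htransient o x
  constructor
  · rw [ENNReal.ofReal_toReal hK₁T]
    exact (ENNReal.le_div_iff_mul_le (Or.inl hB0) (Or.inl hBT)).mpr (hlower x)
  · refine (ENNReal.div_le_iff_le_mul (Or.inl hB0) (Or.inl hBT)).mpr ?_
    refine (hupper x).trans (mul_le_mul_left ?_ _)
    calc K₂ = ENNReal.ofReal K₂.toReal := (ENNReal.ofReal_toReal hK₂T).symm
      _ ≤ ENNReal.ofReal (max K₁.toReal K₂.toReal) :=
        ENNReal.ofReal_le_ofReal (le_max_right _ _)
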